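/- The Dunford-Pettis class fails the restriction property (CH1): let E be a Banach space, a ∈ E with a ≠ 0, and φ ∈ E' with |φ(a)| = 1. Then the bilinear map T : E × ℓ₂ → ℓ₂, T(x, y) = φ(x)·y, is Dunford-Pettis, but the linear map T_a : ℓ₂ → ℓ₂, T_a(y) = T(a, y) = φ(a)·y, is not Dunford-Pettis (equivalently, not completely continuous), since T_a(e_j) does not converge to 0 in norm while (e_j) is weakly null. -/

import Mathlib

open Filter Topology lp ENNReal

noncomputable section

def WeaklyNull {𝕜 E : Type*} [RCLike 𝕜] [NormedAddCommGroup E] [NormedSpace 𝕜 E]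
    (x : ℕ → E) : Prop :=
  ∀ φ : E →L[𝕜] 𝕜, Tendsto (fun j => φ (x j)) atTop (nhds 0)

/-- A weakly null sequence in a normed space is norm-bounded (Banach–Steinhaus). -/
lemma weaklyNull_bounded {𝕜 F : Type*} [RCLike 𝕜] [NormedAddCommGroup F] [NormedSpace 𝕜 F]
    (y : ℕ → F) (hy : WeaklyNull (𝕜 := 𝕜) y) : ∃ C, ∀ j, ‖y j‖ ≤ C := by
  have h := banach_steinhaus (ι := ℕ)
    (g := fun j => NormedSpace.inclusionInDoubleDual 𝕜 F (y j)) ?_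
  · obtain ⟨C, hC⟩ := h
    refine ⟨C, fun j => ?_⟩
    have := (NormedSpace.inclusionInDoubleDualLi (𝕜 := 𝕜) (E := F)).norm_map (y j)
    rw [← this]
    exact hC j
  · intro ψ
    have := (hy ψ).norm.bddAbove_range
    obtain ⟨C, hC⟩ := this
    exact ⟨C, fun j => by simpa using hC ⟨j, rfl⟩⟩

/-- The standard unit vectors in ℓ² are weakly null. -/
lemma e_weaklyNull {𝕜 : Type*} [RCLike 𝕜] :
    WeaklyNull (𝕜 := 𝕜) (fun j => lp.single (E := fun _ : ℕ => 𝕜) 2 j (1 : 𝕜)) := by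
  intro ψ
  set v := (InnerProductSpace.toDual 𝕜 (lp (fun _ : ℕ => 𝕜) 2)).symm ψ with hv
  have hrep : ∀ x, ψ x = inner (𝕜 := 𝕜) v x := fun x => by
    rw [hv]; simp [InnerProductSpace.toDual_symm_apply]
  have hform : ∀ j, ψ (lp.single 2 j (1 : 𝕜)) = (starRingEnd 𝕜) (v j) := by
    intro j
    rw [hrep, lp.inner_single_right]
    simp [RCLike.inner_apply]
  have hsum : Summable (fun j => ‖(v : ∀ _ : ℕ, 𝕜) j‖ ^ ((2:ℝ≥0∞).toReal)) := by
    have := lp.memℓp v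
    rwa [memℓp_gen_iff (by norm_num : 0 < (2 : ℝ≥0∞).toReal)] at this
  have hnorm : Tendsto (fun j => ‖v j‖) atTop (nhds 0) := by
    have h2 := hsum.tendsto_atTop_zero
    have : Tendsto (fun j => (‖v j‖ ^ (2:ℝ)) ^ ((2:ℝ)⁻¹)) atTop (nhds 0) := by
      simpa using (h2.rpow_const (p := (2:ℝ)⁻¹) (Or.inr (by norm_num)))
    refine this.congr fun j => ?_
    rw [← Real.rpow_mul (norm_nonneg _)]
    norm_num
  simp only [hform]
  rw [tendsto_zero_iff_norm_tendsto_zero]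
  simpa using hnorm

/-- the Dunford–Pettis class fails (CH1): for a Banach space `E`, `a ∈ E`
with `a ≠ 0`, and `φ ∈ E'` with `|φ(a)| = 1`, the bilinear map
`T : E × ℓ₂ → ℓ₂`, `T(x,y) = φ(x) • y`, is Dunford–Pettis, but the fixed-argument linear
map `T_a(y) = φ(a) • y` is not Dunford–Pettis (not completely continuous). -/
theorem stmt8 {𝕜 E : Type*} [RCLike 𝕜]
    [NormedAddCommGroup E] [NormedSpace 𝕜 E] [CompleteSpace E]
    (a : E) (ha : a ≠ 0) (φ : E →L[𝕜] 𝕜) (hφa : ‖φ a‖ = 1) :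
    -- `T` is Dunford–Pettis:
    (∀ (x : ℕ → E) (y : ℕ → lp (fun _ : ℕ => 𝕜) 2),
      WeaklyNull (𝕜 := 𝕜) x → WeaklyNull (𝕜 := 𝕜) y →
      Tendsto (fun j => ‖φ (x j) • y j‖) atTop (nhds 0)) ∧
    -- but `T_a` is not Dunford–Pettis:
    ¬ (∀ y : ℕ → lp (fun _ : ℕ => 𝕜) 2, WeaklyNull (𝕜 := 𝕜) y →
      Tendsto (fun j => ‖φ a • y j‖) atTop (nhds 0)) := by
  constructor
  · intro x y hx hy
    obtain ⟨C, hC⟩ := weaklyNull_bounded (𝕜 := 𝕜) y hy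
    have hx0 : Tendsto (fun j => ‖φ (x j)‖ * C) atTop (nhds 0) := by
      simpa using ((hx φ).norm.mul_const C)
    refine squeeze_zero (fun j => norm_nonneg _) (fun j => ?_) hx0
    rw [norm_smul]
    exact mul_le_mul_of_nonneg_left (hC j) (norm_nonneg _)
  · intro h
    have := h (fun j => lp.single 2 j (1 : 𝕜)) (e_weaklyNull (𝕜 := 𝕜))
    have hone : ∀ j : ℕ, ‖φ a • lp.single (E := fun _ : ℕ => 𝕜) 2 j (1 : 𝕜)‖ = 1 := by
      intro j
      rw [norm_smul, hφa, one_mul]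
      have := lp.norm_single (E := fun _ : ℕ => 𝕜) (p := 2) (by norm_num)
        j (1 : 𝕜)
      simpa using this
    rw [tendsto_congr hone] at this
    exact one_ne_zero (tendsto_nhds_unique tendsto_const_nhds this)

end
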